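/- arXiv:2409.17493 — 2 statements merged into one kernel-verified Lean document; each statement's English description precedes it below -/
import Mathlib

section
/- Let $t_0>0$, $C\ge 0$, let $g:[t_0,+\infty)\to\mathcal{Y}$ (a real Hilbert space) be continuously differentiable and $a:[t_0,+\infty)\to[0,+\infty)$ be continuously differentiable. If $\|g(t)+\int_{t_0}^{t} a(s)g(s)\,ds\|\le C$ for all $t\ge t_0$, then $\sup_{t\ge t_0}\|g(t)\|<+\infty$. -/
open Set MeasureTheory Topology Filter

theorem stmt0 {Y : Type*} [NormedAddCommGroup Y] [InnerProductSpace ℝ Y] [CompleteSpace Y]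
    (t₀ C : ℝ) (ht₀ : 0 < t₀) (hC : 0 ≤ C)
    (g : ℝ → Y) (a : ℝ → ℝ)
    (hg : ContDiffOn ℝ 1 g (Set.Ici t₀))
    (ha : ContDiffOn ℝ 1 a (Set.Ici t₀))
    (ha0 : ∀ t ≥ t₀, 0 ≤ a t)
    (hbound : ∀ t ≥ t₀, ‖g t + ∫ s in t₀..t, a s • g s‖ ≤ C) :
    ∃ M : ℝ, ∀ t ≥ t₀, ‖g t‖ ≤ M := by
  set f : ℝ → Y := fun s => a s • g s with hfdef
  have ca : ContinuousOn a (Ici t₀) := ha.continuousOn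
  have cg : ContinuousOn g (Ici t₀) := hg.continuousOn
  have cf : ContinuousOn f (Ici t₀) := ca.smul cg
  have hint : ∀ x ≥ t₀, IntervalIntegrable f volume t₀ x := fun x hx =>
    (cf.mono (by rw [uIcc_of_le hx]; exact Icc_subset_Ici_self)).intervalIntegrable
  have hinta : ∀ x ≥ t₀, IntervalIntegrable a volume t₀ x := fun x hx =>
    (ca.mono (by rw [uIcc_of_le hx]; exact Icc_subset_Ici_self)).intervalIntegrable
  set F : ℝ → Y := fun t => ∫ s in t₀..t, f s with hFdef
  set A : ℝ → ℝ := fun t => ∫ s in t₀..t, a s with hAdef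
  have measf : ∀ l : Filter ℝ, Ici t₀ ∈ l → StronglyMeasurableAtFilter f l volume := fun l hl =>
    AEStronglyMeasurable.stronglyMeasurableAtFilter_of_mem
      (cf.aestronglyMeasurable measurableSet_Ici) hl
  have measa : ∀ l : Filter ℝ, Ici t₀ ∈ l → StronglyMeasurableAtFilter a l volume := fun l hl =>
    AEStronglyMeasurable.stronglyMeasurableAtFilter_of_mem
      (ca.aestronglyMeasurable measurableSet_Ici) hl
  have hmemIoi : ∀ x ≥ t₀, Ici t₀ ∈ 𝓝[>] x := fun x hx =>
    Filter.mem_of_superset self_mem_nhdsWithin fun y hy => le_trans hx (le_of_lt hy)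
  have hF : ∀ x ≥ t₀, HasDerivWithinAt F (f x) (Ici x) x := fun x hx =>
    intervalIntegral.integral_hasDerivWithinAt_right (hint x hx)
      (measf _ (hmemIoi x hx)) ((cf x (mem_Ici.2 hx)).mono fun y hy => le_trans hx (le_of_lt hy))
  have hA : ∀ x ≥ t₀, HasDerivWithinAt A (a x) (Ici x) x := fun x hx =>
    intervalIntegral.integral_hasDerivWithinAt_right (hinta x hx)
      (measa _ (hmemIoi x hx)) ((ca x (mem_Ici.2 hx)).mono fun y hy => le_trans hx (le_of_lt hy))
  -- two-sided derivatives at interior points, for continuity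
  have hF' : ∀ x > t₀, HasDerivAt F (f x) x := fun x hx =>
    intervalIntegral.integral_hasDerivAt_right (hint x hx.le)
      (measf _ (Ici_mem_nhds hx)) (cf.continuousAt (Ici_mem_nhds hx))
  have hA' : ∀ x > t₀, HasDerivAt A (a x) x := fun x hx =>
    intervalIntegral.integral_hasDerivAt_right (hinta x hx.le)
      (measa _ (Ici_mem_nhds hx)) (ca.continuousAt (Ici_mem_nhds hx))
  have cF : ContinuousOn F (Ici t₀) := by
    intro x hx
    rcases eq_or_lt_of_le (mem_Ici.1 hx) with h | h
    · exact ((hF x h.le).continuousWithinAt).mono (by rw [h])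
    · exact (hF' x h).continuousAt.continuousWithinAt
  have cA : ContinuousOn A (Ici t₀) := by
    intro x hx
    rcases eq_or_lt_of_le (mem_Ici.1 hx) with h | h
    · exact ((hA x h.le).continuousWithinAt).mono (by rw [h])
    · exact (hA' x h).continuousAt.continuousWithinAt
  -- the key estimate : ‖F t‖ ≤ C for all t ≥ t₀
  have key : ∀ t ≥ t₀, ‖F t‖ ≤ C := by
    intro t ht
    set u : ℝ → Y := fun s => Real.exp (A s) • F s with hudef
    set B : ℝ → ℝ := fun s => C * Real.exp (A s) with hBdef
    have hu' : ∀ x ∈ Ico t₀ t, HasDerivWithinAt u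
        (Real.exp (A x) • f x + (Real.exp (A x) * a x) • F x) (Ici x) x := fun x hx =>
      ((hA x hx.1).exp).smul (hF x hx.1)
    have hB' : ∀ x ∈ Ico t₀ t, HasDerivWithinAt B
        (C * (Real.exp (A x) * a x)) (Ici x) x := fun x hx =>
      ((hA x hx.1).exp).const_mul C
    have hu_cont : ContinuousOn u (Icc t₀ t) :=
      ((Real.continuous_exp.comp_continuousOn cA).smul cF).mono Icc_subset_Ici_self
    have hB_cont : ContinuousOn B (Icc t₀ t) :=
      (continuousOn_const.mul (Real.continuous_exp.comp_continuousOn cA)).mono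
        Icc_subset_Ici_self
    have hinit : ‖u t₀‖ ≤ B t₀ := by
      have : F t₀ = 0 := intervalIntegral.integral_same
      simp only [hudef, hBdef, this, smul_zero, norm_zero]
      positivity
    have hbnd : ∀ x ∈ Ico t₀ t, ‖Real.exp (A x) • f x + (Real.exp (A x) * a x) • F x‖ ≤
        C * (Real.exp (A x) * a x) := by
      intro x hx
      have hEq : Real.exp (A x) • f x + (Real.exp (A x) * a x) • F x
          = (Real.exp (A x) * a x) • (g x + F x) := by
        simp only [hfdef, smul_smul, smul_add]
      rw [hEq, norm_smul, Real.norm_eq_abs, abs_of_nonneg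
        (mul_nonneg (Real.exp_pos _).le (ha0 x hx.1))]
      calc Real.exp (A x) * a x * ‖g x + F x‖
          ≤ Real.exp (A x) * a x * C :=
            mul_le_mul_of_nonneg_left (hbound x hx.1)
              (mul_nonneg (Real.exp_pos _).le (ha0 x hx.1))
        _ = C * (Real.exp (A x) * a x) := by ring
    have := image_norm_le_of_norm_deriv_right_le_deriv_boundary' hu_cont hu' hinit
      hB_cont hB' hbnd (right_mem_Icc.2 ht)
    have hut : ‖u t‖ = Real.exp (A t) * ‖F t‖ := by
      rw [hudef]; rw [norm_smul, Real.norm_eq_abs, abs_of_pos (Real.exp_pos _)]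
    have h2 : Real.exp (A t) * ‖F t‖ ≤ C * Real.exp (A t) := by
      rw [← hut]; simpa using this
    nlinarith [Real.exp_pos (A t)]
  refine ⟨2 * C, fun t ht => ?_⟩
  have : g t = (g t + F t) - F t := by abel
  rw [this]
  calc ‖(g t + F t) - F t‖ ≤ ‖g t + F t‖ + ‖F t‖ := norm_sub_le _ _
    _ ≤ C + C := add_le_add (hbound t ht) (key t ht)
    _ = 2 * C := by ring
end

section
/- Let $\theta>0$, $t_0>0$, let $\mathcal{X}$ be a real Hilbert space, $z\in\mathcal{X}$, and let $x:[t_0,+\infty)\to\mathcal{X}$ be continuously differentiable. If there exists a constant $\widehat{C}\ge 0$ such that $\|x(t)-z+\theta t\,\dot{x}(t)\|^2\le\widehat{C}$ for all $t\ge t_0$, then $x$ is bounded on $[t_0,+\infty)$. -/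
open Set

theorem stmt2 {X : Type*} [NormedAddCommGroup X] [InnerProductSpace ℝ X]
    (θ t₀ : ℝ) (hθ : 0 < θ) (ht₀ : 0 < t₀) (z : X)
    (x x' : ℝ → X)
    (hx : ∀ t ≥ t₀, HasDerivAt x (x' t) t)
    (hx' : ContinuousOn x' (Set.Ici t₀))
    (C : ℝ) (hC : 0 ≤ C)
    (hb : ∀ t ≥ t₀, ‖x t - z + (θ * t) • x' t‖ ^ 2 ≤ C) :
    ∃ M : ℝ, ∀ t ≥ t₀, ‖x t‖ ≤ M := by
  have hc : (0:ℝ) < θ⁻¹ := inv_pos.mpr hθ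
  set c : ℝ := θ⁻¹ with hcdef
  set h : ℝ → ℝ := fun t => ‖x t - z‖ ^ 2 with hh
  have hder : ∀ t ≥ t₀, HasDerivAt h (2 * inner ℝ (x t - z) (x' t)) t := by
    intro t ht
    have h1 : HasDerivAt (fun s => x s - z) (x' t) t := (hx t ht).sub_const z
    have h2 := h1.inner ℝ h1
    have h3 : (fun s => (inner ℝ (x s - z) (x s - z) : ℝ)) = h := by
      funext s; simp [hh, real_inner_self_eq_norm_sq]
    rw [h3] at h2
    refine h2.congr_deriv ?_
    rw [real_inner_comm (x' t) (x t - z)]; ring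
  set u : ℝ → ℝ := fun t => t ^ c * (h t - C) with hu
  have huder : ∀ t ≥ t₀, HasDerivAt u
      (c * t ^ (c - 1) * (h t - C) + t ^ c * (2 * inner ℝ (x t - z) (x' t))) t := by
    intro t ht
    have htpos : (0:ℝ) < t := lt_of_lt_of_le ht₀ ht
    have hr : HasDerivAt (fun s : ℝ => s ^ c) (c * t ^ (c - 1)) t := by
      have := Real.hasDerivAt_rpow_const (x := t) (p := c) (Or.inl htpos.ne')
      simpa [mul_comm] using this
    exact hr.mul ((hder t ht).sub_const C)
  -- key inequality : derivative of u is nonpositive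
  have hkey : ∀ t ≥ t₀,
      c * t ^ (c - 1) * (h t - C) + t ^ c * (2 * inner ℝ (x t - z) (x' t)) ≤ 0 := by
    intro t ht
    have htpos : (0:ℝ) < t := lt_of_lt_of_le ht₀ ht
    have hexp := hb t ht
    rw [norm_add_sq_real, real_inner_smul_right] at hexp
    have hbd : h t + θ * t * (2 * inner ℝ (x t - z) (x' t)) ≤ C := by
      show ‖x t - z‖ ^ 2 + θ * t * (2 * inner ℝ (x t - z) (x' t)) ≤ C
      nlinarith [sq_nonneg ‖(θ * t) • x' t‖]
    have htc : t ^ c = t * t ^ (c - 1) := by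
      have e1 : t ^ c = t ^ (1 + (c - 1)) := by ring_nf
      rw [e1, Real.rpow_add htpos, Real.rpow_one]
    have hpow : (0:ℝ) < t ^ (c - 1) := Real.rpow_pos_of_pos htpos _
    rw [htc]
    have : c * (h t - C) + t * (2 * inner ℝ (x t - z) (x' t)) ≤ 0 := by
      have hcθ : c * θ = 1 := inv_mul_cancel₀ hθ.ne'
      nlinarith
    nlinarith
  -- u is antitone on Ici t₀
  have hcont : ContinuousOn u (Ici t₀) := fun t ht =>
    ((huder t ht).continuousAt.continuousWithinAt)
  have hanti : AntitoneOn u (Ici t₀) := by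
    apply antitoneOn_of_deriv_nonpos (convex_Ici t₀) hcont
    · intro t ht
      rw [interior_Ici] at ht
      exact (huder t (le_of_lt ht)).differentiableAt.differentiableWithinAt
    · intro t ht
      rw [interior_Ici] at ht
      rw [HasDerivAt.deriv (huder t (le_of_lt ht))]
      exact hkey t (le_of_lt ht)
  set K : ℝ := max (u t₀) 0 with hK
  refine ⟨Real.sqrt (C + K / t₀ ^ c) + ‖z‖, fun t ht => ?_⟩
  have htpos : (0:ℝ) < t := lt_of_lt_of_le ht₀ ht
  have hut : u t ≤ u t₀ := hanti self_mem_Ici ht ht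
  have htc : (0:ℝ) < t ^ c := Real.rpow_pos_of_pos htpos _
  have ht₀c : (0:ℝ) < t₀ ^ c := Real.rpow_pos_of_pos ht₀ _
  have hmono : t₀ ^ c ≤ t ^ c := Real.rpow_le_rpow (le_of_lt ht₀) ht (le_of_lt hc)
  have hK0 : 0 ≤ K := le_max_right _ _
  have hht : h t ≤ C + K / t₀ ^ c := by
    have h1 : (h t - C) * t ^ c = u t := by rw [hu]; ring
    have h2 : u t ≤ K := hut.trans (le_max_left _ _)
    have h4 : K / t₀ ^ c * t₀ ^ c = K := div_mul_cancel₀ _ ht₀c.ne'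
    have h5 : 0 ≤ K / t₀ ^ c := div_nonneg hK0 ht₀c.le
    nlinarith
  have hxz : ‖x t - z‖ ≤ Real.sqrt (C + K / t₀ ^ c) := by
    rw [show Real.sqrt (C + K / t₀ ^ c) = Real.sqrt (C + K / t₀ ^ c) from rfl]
    have : ‖x t - z‖ ^ 2 ≤ C + K / t₀ ^ c := hht
    nlinarith [Real.sq_sqrt (show (0:ℝ) ≤ C + K / t₀ ^ c by positivity),
      Real.sqrt_nonneg (C + K / t₀ ^ c), norm_nonneg (x t - z)]
  calc ‖x t‖ = ‖x t - z + z‖ := by rw [sub_add_cancel]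
    _ ≤ ‖x t - z‖ + ‖z‖ := norm_add_le _ _
    _ ≤ _ := by linarith
end
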